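/- Let λ be a strict partition with 1 ≤ l(λ) ≤ n. Then the polynomials P*_{λ|n} and P_{λ|n} exist (i.e., the respective antisymmetrized sums are divisible by (n−l(λ))!·V in ℚ[x_1,...,x_n]), and the difference P*_{λ|n} − P_{λ|n} is a supersymmetric polynomial of total degree strictly less than |λ|. -/

import Mathlib

open MvPolynomial Finset

/-- The Vandermonde polynomial `V = ∏_{1 ≤ i < j ≤ n} (x_i - x_j)`. -/
noncomputable def vand (n : ℕ) : MvPolynomial (Fin n) ℚ :=
  ∏ p ∈ Finset.univ.filter (fun p : Fin n × Fin n => p.1 < p.2), (X p.1 - X p.2)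

/-- `∏_{1 ≤ i ≤ l, i < j ≤ n} (x_i + x_j)`. -/
noncomputable def prodPlus (n l : ℕ) : MvPolynomial (Fin n) ℚ :=
  ∏ p ∈ Finset.univ.filter (fun p : Fin n × Fin n => (p.1 : ℕ) < l ∧ p.1 < p.2),
    (X p.1 + X p.2)

/-- `∏_{l < i < j ≤ n} (x_i - x_j)`. -/
noncomputable def prodMinus (n l : ℕ) : MvPolynomial (Fin n) ℚ :=
  ∏ p ∈ Finset.univ.filter (fun p : Fin n × Fin n => l ≤ (p.1 : ℕ) ∧ p.1 < p.2),
    (X p.1 - X p.2)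

/-- The signed symmetrization `∑_{ω ∈ S(n)} sgn(ω) · f(x_{ω(1)}, …, x_{ω(n)})`. -/
noncomputable def antiSum (n : ℕ) (f : MvPolynomial (Fin n) ℚ) : MvPolynomial (Fin n) ℚ :=
  ∑ ω : Equiv.Perm (Fin n), ((Equiv.Perm.sign ω : ℤ) : ℚ) • rename (⇑ω) f

/-- `∏_{i=1}^{l} (x_i ↓ λ_i)`, the product of falling factorial powers; here `lam i = 0`
for `i ≥ l`, so those factors are `1`. -/
noncomputable def fallProd (n : ℕ) (lam : Fin n → ℕ) : MvPolynomial (Fin n) ℚ :=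
  ∏ i : Fin n, ∏ k ∈ Finset.range (lam i), (X i - C (k : ℚ))

/-- `∏_{i=1}^{l} x_i^{λ_i}`; here `lam i = 0` for `i ≥ l`, so those factors are `1`. -/
noncomputable def powProd (n : ℕ) (lam : Fin n → ℕ) : MvPolynomial (Fin n) ℚ :=
  ∏ i : Fin n, X i ^ lam i

/-- A polynomial `f(x_1, …, x_n)` is supersymmetric if it is symmetric and, for all
`1 ≤ i < j ≤ n`, the result of substituting `x_i = t`, `x_j = -t` does not depend on `t`. -/
def IsSupersymmetric {n : ℕ} (f : MvPolynomial (Fin n) ℚ) : Prop :=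
  (∀ ω : Equiv.Perm (Fin n), rename (⇑ω) f = f) ∧
  (∀ i j : Fin n, i < j → ∀ s t : ℚ,
    aeval (fun k : Fin n => if k = i then C s else if k = j then C (-s) else X k) f =
    aeval (fun k : Fin n => if k = i then C t else if k = j then C (-t) else X k) f)

namespace SSaux


variable {N : ℕ}

lemma degreeOf_neg (x : Fin N) (f : MvPolynomial (Fin N) ℚ) :
    degreeOf x (-f) = degreeOf x f := by
  classical
  simp [MvPolynomial.degreeOf_eq_sup, MvPolynomial.support_neg]

lemma le_degreeOf {f : MvPolynomial (Fin N) ℚ} {m : (Fin N) →₀ ℕ} (h : coeff m f ≠ 0)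
    (x : Fin N) : m x ≤ degreeOf x f := by
  classical
  rw [MvPolynomial.degreeOf_eq_sup]
  exact Finset.le_sup (f := fun m => m x) (MvPolynomial.mem_support_iff.2 h)

lemma degreeOf_eq_zero_of_not_mem_vars {x : Fin N} {f : MvPolynomial (Fin N) ℚ}
    (h : x ∉ f.vars) : degreeOf x f = 0 := by
  classical
  rw [MvPolynomial.degreeOf_eq_sup]
  refine Nat.le_zero.1 (Finset.sup_le fun m hm => ?_)
  by_contra hc
  exact h (MvPolynomial.mem_vars x |>.2 ⟨m, hm, Finsupp.mem_support_iff.2 (by omega)⟩)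

lemma not_mem_vars_of_degreeOf_zero {x : Fin N} {f : MvPolynomial (Fin N) ℚ}
    (h : degreeOf x f = 0) : x ∉ f.vars := by
  classical
  intro hx
  obtain ⟨m, hm, hxm⟩ := (MvPolynomial.mem_vars x).1 hx
  have h1 : 1 ≤ m x := Nat.one_le_iff_ne_zero.2 (Finsupp.mem_support_iff.1 hxm)
  have := le_degreeOf (MvPolynomial.mem_support_iff.1 hm) x
  omega

lemma degreeOf_smul_le (c : ℚ) (x : Fin N) (f : MvPolynomial (Fin N) ℚ) :
    degreeOf x (c • f) ≤ degreeOf x f := by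
  rw [MvPolynomial.smul_eq_C_mul]
  calc degreeOf x (C c * f) ≤ degreeOf x (C c) + degreeOf x f := degreeOf_mul_le _ _ _
  _ = degreeOf x f := by rw [degreeOf_C]; omega

lemma degreeOf_prod_le {ι : Type*} (x : Fin N) (s : Finset ι) (f : ι → MvPolynomial (Fin N) ℚ) :
    degreeOf x (∏ p ∈ s, f p) ≤ ∑ p ∈ s, degreeOf x (f p) := by
  classical
  induction s using Finset.cons_induction with
  | empty => simpa using MvPolynomial.degreeOf_C (1:ℚ) x
  | cons p s hp ih =>
    rw [Finset.prod_cons, Finset.sum_cons]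
    exact (degreeOf_mul_le _ _ _).trans (by omega)

lemma degreeOf_sum_le {ι : Type*} (x : Fin N) (s : Finset ι) (f : ι → MvPolynomial (Fin N) ℚ)
    {M : ℕ} (h : ∀ p ∈ s, degreeOf x (f p) ≤ M) :
    degreeOf x (∑ p ∈ s, f p) ≤ M := by
  classical
  induction s using Finset.cons_induction with
  | empty => simp
  | cons p s hp ih =>
    rw [Finset.sum_cons]
    refine (degreeOf_add_le _ _ _).trans ?_
    exact max_le (h p (Finset.mem_cons_self _ _)) (ih fun q hq => h q (Finset.mem_cons_of_mem hq))

lemma degreeOf_mul_eq (x : Fin N) {f g : MvPolynomial (Fin N) ℚ} (hf : f ≠ 0) (hg : g ≠ 0) :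
    degreeOf x (f * g) = degreeOf x f + degreeOf x g := by
  cases N with
  | zero => exact x.elim0
  | succ m =>
    set e := Equiv.swap x 0 with he
    have key : ∀ h : MvPolynomial (Fin (m + 1)) ℚ,
        degreeOf x h = (finSuccEquiv ℚ m (rename (⇑e) h)).natDegree := by
      intro h
      rw [natDegree_finSuccEquiv]
      have := MvPolynomial.degreeOf_rename_of_injective (p := h) e.injective x
      rw [Equiv.swap_apply_left] at this
      exact this.symm
    have hren : Function.Injective (rename (⇑e) : MvPolynomial (Fin (m+1)) ℚ → _) :=
      MvPolynomial.rename_injective _ e.injective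
    have hfe : rename (⇑e) f ≠ 0 := fun h0 => hf (hren (by simp [h0]))
    have hge : rename (⇑e) g ≠ 0 := fun h0 => hg (hren (by simp [h0]))
    have hfe2 : finSuccEquiv ℚ m (rename (⇑e) f) ≠ 0 :=
      fun h0 => hfe ((finSuccEquiv ℚ m).injective (by simp [h0]))
    have hge2 : finSuccEquiv ℚ m (rename (⇑e) g) ≠ 0 :=
      fun h0 => hge ((finSuccEquiv ℚ m).injective (by simp [h0]))
    rw [key, key, key, map_mul, map_mul, Polynomial.natDegree_mul hfe2 hge2]

lemma degreeOf_prod_eq {ι : Type*} (x : Fin N) (s : Finset ι) (f : ι → MvPolynomial (Fin N) ℚ)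
    (h : ∀ p ∈ s, f p ≠ 0) :
    degreeOf x (∏ p ∈ s, f p) = ∑ p ∈ s, degreeOf x (f p) := by
  classical
  induction s using Finset.cons_induction with
  | empty => simpa using MvPolynomial.degreeOf_C (1:ℚ) x
  | cons p s hp ih =>
    rw [Finset.prod_cons, Finset.sum_cons,
      degreeOf_mul_eq x (h p (Finset.mem_cons_self _ _))
        (Finset.prod_ne_zero_iff.2 fun q hq => h q (Finset.mem_cons_of_mem hq)),
      ih fun q hq => h q (Finset.mem_cons_of_mem hq)]



variable {N : ℕ}

lemma deg_bilin {a b : Fin N} (hab : a ≠ b) {c d : ℚ} (hc : c ≠ 0) (hd : d ≠ 0) :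
    (monomial (Finsupp.single a 1) c + monomial (Finsupp.single b 1) d :
        MvPolynomial (Fin N) ℚ) ≠ 0 ∧
      ∀ x : Fin N, degreeOf x
        (monomial (Finsupp.single a 1) c + monomial (Finsupp.single b 1) d :
          MvPolynomial (Fin N) ℚ) = if x = a ∨ x = b then 1 else 0 := by
  classical
  set p : MvPolynomial (Fin N) ℚ :=
    monomial (Finsupp.single a 1) c + monomial (Finsupp.single b 1) d with hp
  have hss : (Finsupp.single a 1 : Fin N →₀ ℕ) ≠ Finsupp.single b 1 :=
    fun h => hab (Finsupp.single_left_injective one_ne_zero h)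
  have hca : coeff (Finsupp.single a 1) p = c := by
    rw [hp, coeff_add, coeff_monomial, coeff_monomial, if_pos rfl, if_neg (Ne.symm hss), add_zero]
  have hcb : coeff (Finsupp.single b 1) p = d := by
    rw [hp, coeff_add, coeff_monomial, coeff_monomial, if_neg hss, if_pos rfl, zero_add]
  have hsupp : p.support = {Finsupp.single a 1, Finsupp.single b 1} := by
    apply Finset.Subset.antisymm
    · refine (MvPolynomial.support_add).trans ?_
      rw [support_monomial, support_monomial, if_neg hc, if_neg hd]
      intro z hz
      simp only [Finset.mem_union, Finset.mem_singleton] at hz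
      simp [Finset.mem_insert, hz]
    · intro z hz
      simp only [Finset.mem_insert, Finset.mem_singleton] at hz
      rcases hz with rfl | rfl
      · exact MvPolynomial.mem_support_iff.2 (hca ▸ hc)
      · exact MvPolynomial.mem_support_iff.2 (hcb ▸ hd)
  constructor
  · exact fun h0 => hc (by rw [← hca, h0, coeff_zero])
  · intro x
    rw [MvPolynomial.degreeOf_eq_sup, hsupp, Finset.sup_insert, Finset.sup_singleton]
    by_cases hxa : x = a
    · subst hxa
      rw [if_pos (Or.inl rfl)]
      simp [Finsupp.single_apply, if_neg (fun h : b = x => hab h.symm)]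
    · by_cases hxb : x = b
      · subst hxb
        rw [if_pos (Or.inr rfl)]
        simp [Finsupp.single_apply, if_neg (fun h : a = x => hxa h.symm)]
      · rw [if_neg (by tauto)]
        simp [Finsupp.single_apply, if_neg (fun h : a = x => hxa h.symm),
          if_neg (fun h : b = x => hxb h.symm)]

lemma deg_mono {a : Fin N} {c : ℚ} (hc : c ≠ 0) :
    (monomial (Finsupp.single a 1) c : MvPolynomial (Fin N) ℚ) ≠ 0 ∧
      ∀ x : Fin N, degreeOf x (monomial (Finsupp.single a 1) c : MvPolynomial (Fin N) ℚ)
        = if x = a then 1 else 0 := by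
  classical
  constructor
  · exact fun h0 => hc (MvPolynomial.monomial_eq_zero.1 h0)
  · intro x
    rw [MvPolynomial.degreeOf_eq_sup, support_monomial, if_neg hc, Finset.sup_singleton]
    by_cases hxa : x = a
    · subst hxa; simp [Finsupp.single_apply]
    · simp [Finsupp.single_apply, if_neg (fun h : a = x => hxa h.symm), hxa]

lemma X_as_monomial (a : Fin N) :
    (X a : MvPolynomial (Fin N) ℚ) = monomial (Finsupp.single a 1) 1 := rfl

lemma X_sub_X_eq (a b : Fin N) :
    (X a - X b : MvPolynomial (Fin N) ℚ)
      = monomial (Finsupp.single a 1) 1 + monomial (Finsupp.single b 1) (-1) := by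
  rw [sub_eq_add_neg, X_as_monomial, X_as_monomial]
  congr 1
  rw [← map_neg]

lemma X_add_X_eq (a b : Fin N) :
    (X a + X b : MvPolynomial (Fin N) ℚ)
      = monomial (Finsupp.single a 1) 1 + monomial (Finsupp.single b 1) 1 := rfl

lemma X_add_X_self (a : Fin N) :
    (X a + X a : MvPolynomial (Fin N) ℚ) = monomial (Finsupp.single a 1) 2 := by
  rw [X_as_monomial, ← map_add]
  norm_num

lemma X_sub_X_ne {a b : Fin N} (hab : a ≠ b) :
    (X a - X b : MvPolynomial (Fin N) ℚ) ≠ 0 := by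
  rw [X_sub_X_eq]
  exact (deg_bilin hab one_ne_zero (by norm_num)).1

lemma degreeOf_X_sub_X {a b : Fin N} (hab : a ≠ b) (x : Fin N) :
    degreeOf x (X a - X b : MvPolynomial (Fin N) ℚ) = if x = a ∨ x = b then 1 else 0 := by
  rw [X_sub_X_eq]
  exact (deg_bilin hab one_ne_zero (by norm_num)).2 x

lemma X_add_X_ne {a b : Fin N} (hab : a ≠ b) :
    (X a + X b : MvPolynomial (Fin N) ℚ) ≠ 0 := by
  rw [X_add_X_eq]
  exact (deg_bilin hab one_ne_zero one_ne_zero).1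

lemma degreeOf_X_add_X {a b : Fin N} (hab : a ≠ b) (x : Fin N) :
    degreeOf x (X a + X b : MvPolynomial (Fin N) ℚ) = if x = a ∨ x = b then 1 else 0 := by
  rw [X_add_X_eq]
  exact (deg_bilin hab one_ne_zero one_ne_zero).2 x

lemma X_add_X_self_ne (a : Fin N) : (X a + X a : MvPolynomial (Fin N) ℚ) ≠ 0 := by
  rw [X_add_X_self]
  exact (deg_mono (by norm_num)).1

lemma degreeOf_X_add_X_self (a : Fin N) (x : Fin N) :
    degreeOf x (X a + X a : MvPolynomial (Fin N) ℚ) = if x = a then 1 else 0 := by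
  rw [X_add_X_self]
  exact (deg_mono (by norm_num)).2 x

lemma totalDegree_X_sub_X {a b : Fin N} (hab : a ≠ b) :
    (X a - X b : MvPolynomial (Fin N) ℚ).totalDegree = 1 := by
  classical
  apply le_antisymm
  · rw [sub_eq_add_neg]
    refine (MvPolynomial.totalDegree_add _ _).trans ?_
    rw [MvPolynomial.totalDegree_neg, MvPolynomial.totalDegree_X, MvPolynomial.totalDegree_X]
    omega
  · have hmem : (Finsupp.single a 1 : Fin N →₀ ℕ) ∈ (X a - X b : MvPolynomial (Fin N) ℚ).support := by
      rw [X_sub_X_eq]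
      apply MvPolynomial.mem_support_iff.2
      rw [coeff_add, coeff_monomial, coeff_monomial, if_pos rfl,
        if_neg (fun h => hab (Finsupp.single_left_injective one_ne_zero h).symm), add_zero]
      norm_num
    have := MvPolynomial.le_totalDegree hmem
    simpa using this



variable {N : ℕ}

noncomputable def Tm (N : ℕ) : MvPolynomial (Fin N) ℚ →ₐ[ℚ] Polynomial (MvPolynomial (Fin N) ℚ) :=
  aeval fun k => Polynomial.C (X k) * Polynomial.X

lemma Tm_monomial (s : Fin N →₀ ℕ) (c : ℚ) :
    Tm N (monomial s c) = Polynomial.C (monomial s c) * Polynomial.X ^ (s.sum fun _ e => e) := by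
  classical
  rw [Tm, aeval_monomial, monomial_eq]
  have h1 : (s.prod fun i k => (Polynomial.C (X i : MvPolynomial (Fin N) ℚ) * Polynomial.X) ^ k)
      = Polynomial.C (s.prod fun i k => (X i : MvPolynomial (Fin N) ℚ) ^ k)
        * Polynomial.X ^ (s.sum fun _ e => e) := by
    rw [Finsupp.prod, Finsupp.prod, Finsupp.sum]
    calc ∏ a ∈ s.support, (Polynomial.C (X a : MvPolynomial (Fin N) ℚ) * Polynomial.X) ^ s a
        = ∏ a ∈ s.support, (Polynomial.C ((X a : MvPolynomial (Fin N) ℚ) ^ s a)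
            * Polynomial.X ^ s a) := Finset.prod_congr rfl fun k _ => by rw [mul_pow, map_pow]
      _ = (∏ a ∈ s.support, Polynomial.C ((X a : MvPolynomial (Fin N) ℚ) ^ s a))
            * ∏ a ∈ s.support, Polynomial.X ^ s a := Finset.prod_mul_distrib
      _ = _ := by rw [← map_prod, Finset.prod_pow_eq_pow_sum]
  rw [h1, map_mul, Polynomial.algebraMap_apply]
  simp [MvPolynomial.algebraMap_eq]
  ring

lemma Tm_coeff (f : MvPolynomial (Fin N) ℚ) (d : ℕ) :
    (Tm N f).coeff d = ∑ v ∈ f.support,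
      (if (v.sum fun _ e => e) = d then monomial v (coeff v f) else 0) := by
  classical
  conv_lhs => rw [f.as_sum, map_sum, Polynomial.finset_sum_coeff]
  refine Finset.sum_congr rfl fun v hv => ?_
  rw [Tm_monomial, Polynomial.coeff_C_mul, Polynomial.coeff_X_pow]
  by_cases h : (v.sum fun _ e => e) = d
  · rw [if_pos h, if_pos h.symm, mul_one]
  · rw [if_neg h, if_neg (fun hh => h hh.symm), mul_zero]

lemma Tm_coeff_totalDegree {f : MvPolynomial (Fin N) ℚ} (hf : f ≠ 0) :
    (Tm N f).coeff f.totalDegree ≠ 0 := by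
  classical
  obtain ⟨v0, hv0, hsup⟩ := Finset.exists_mem_eq_sup f.support
    (MvPolynomial.support_nonempty.2 hf) (fun v => v.sum fun _ e => e)
  rw [Tm_coeff]
  intro h0
  have : coeff v0 (∑ v ∈ f.support,
      (if (v.sum fun _ e => e) = f.totalDegree then monomial v (coeff v f) else 0)) = 0 := by
    rw [h0, coeff_zero]
  rw [MvPolynomial.coeff_sum] at this
  rw [Finset.sum_eq_single v0] at this
  · rw [if_pos, coeff_monomial, if_pos rfl] at this
    · exact MvPolynomial.mem_support_iff.1 hv0 this
    · rw [MvPolynomial.totalDegree, hsup]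
  · intro v hv hne
    by_cases h : (v.sum fun _ e => e) = f.totalDegree
    · rw [if_pos h, coeff_monomial, if_neg hne]
    · rw [if_neg h, coeff_zero]
  · intro hv0'; exact absurd hv0 hv0'

lemma Tm_natDegree {f : MvPolynomial (Fin N) ℚ} (hf : f ≠ 0) :
    (Tm N f).natDegree = f.totalDegree := by
  classical
  apply le_antisymm
  · apply Polynomial.natDegree_le_iff_coeff_eq_zero.2
    intro d hd
    rw [Tm_coeff]
    apply Finset.sum_eq_zero
    intro v hv
    rw [if_neg]
    intro h
    have := MvPolynomial.le_totalDegree hv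
    omega
  · exact Polynomial.le_natDegree_of_ne_zero (Tm_coeff_totalDegree hf)

lemma Tm_ne_zero {f : MvPolynomial (Fin N) ℚ} (hf : f ≠ 0) : Tm N f ≠ 0 := by
  intro h0
  exact Tm_coeff_totalDegree hf (by rw [h0, Polynomial.coeff_zero])

lemma totalDegree_mul_eq {f g : MvPolynomial (Fin N) ℚ} (hf : f ≠ 0) (hg : g ≠ 0) :
    (f * g).totalDegree = f.totalDegree + g.totalDegree := by
  have hfg : f * g ≠ 0 := mul_ne_zero hf hg
  rw [← Tm_natDegree hfg, ← Tm_natDegree hf, ← Tm_natDegree hg, map_mul,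
    Polynomial.natDegree_mul (Tm_ne_zero hf) (Tm_ne_zero hg)]

lemma totalDegree_prod_eq {ι : Type*} (s : Finset ι) (f : ι → MvPolynomial (Fin N) ℚ)
    (h : ∀ p ∈ s, f p ≠ 0) :
    (∏ p ∈ s, f p).totalDegree = ∑ p ∈ s, (f p).totalDegree := by
  classical
  induction s using Finset.cons_induction with
  | empty => simp
  | cons p s hp ih =>
    rw [Finset.prod_cons, Finset.sum_cons,
      totalDegree_mul_eq (h p (Finset.mem_cons_self _ _))
        (Finset.prod_ne_zero_iff.2 fun q hq => h q (Finset.mem_cons_of_mem hq)),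
      ih fun q hq => h q (Finset.mem_cons_of_mem hq)]

lemma aeval_fix (g : Fin N → MvPolynomial (Fin N) ℚ) (f : MvPolynomial (Fin N) ℚ)
    (h : ∀ k ∈ f.vars, g k = X k) : aeval g f = f := by
  classical
  conv_lhs => rw [f.as_sum, map_sum]
  conv_rhs => rw [f.as_sum]
  refine Finset.sum_congr rfl fun v hv => ?_
  rw [aeval_monomial, monomial_eq]
  congr 1
  rw [Finsupp.prod, Finsupp.prod]
  refine Finset.prod_congr rfl fun k hk => ?_
  rw [h k ((MvPolynomial.mem_vars k).2 ⟨v, hv, hk⟩)]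



lemma prod_pairs {M : Type*} [CommMonoid M] (n : ℕ) (F : Fin n × Fin n → M) :
    ∏ p ∈ Finset.univ.filter (fun p : Fin n × Fin n => p.1 < p.2), F p
      = ∏ i : Fin n, ∏ j ∈ Finset.Ioi i, F (i, j) := by
  rw [Finset.prod_sigma']
  refine Finset.prod_nbij' (i := fun p => (⟨p.1, p.2⟩ : Σ _ : Fin n, Fin n))
    (j := fun x => (x.1, x.2)) ?_ ?_ ?_ ?_ ?_ <;>
    simp +contextual [Finset.mem_sigma, Finset.mem_Ioi, Finset.mem_filter]

lemma rename_vand {n : ℕ} (ω : Equiv.Perm (Fin n)) :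
    rename (⇑ω) (vand n) = ((Equiv.Perm.sign ω : ℤ) : ℚ) • vand n := by
  classical
  have hdet : ∀ v : Fin n → MvPolynomial (Fin n) ℚ,
      ∏ p ∈ Finset.univ.filter (fun p : Fin n × Fin n => p.1 < p.2), (v p.1 - v p.2)
        = (-1 : MvPolynomial (Fin n) ℚ) ^ (∑ i : Fin n, (Finset.Ioi i).card)
          * (Matrix.vandermonde v).det := by
    intro v
    rw [prod_pairs, Matrix.det_vandermonde]
    have hstep : ∀ i : Fin n, ∏ j ∈ Finset.Ioi i, (v i - v j)
        = (-1 : MvPolynomial (Fin n) ℚ) ^ (Finset.Ioi i).card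
          * ∏ j ∈ Finset.Ioi i, (v j - v i) := by
      intro i
      rw [← Finset.prod_const, ← Finset.prod_mul_distrib]
      exact Finset.prod_congr rfl fun j _ => by ring
    rw [Finset.prod_congr rfl fun i _ => hstep i, Finset.prod_mul_distrib]
    congr 1
    exact Finset.prod_pow_eq_pow_sum _ _ _
  have hsub : (Matrix.vandermonde fun k : Fin n => (X k : MvPolynomial (Fin n) ℚ)).map
        (rename (⇑ω)).toRingHom
      = (Matrix.vandermonde fun k : Fin n => (X k : MvPolynomial (Fin n) ℚ)).submatrix ω id := by
    ext i j
    simp [Matrix.vandermonde_apply, Matrix.submatrix_apply, map_pow]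
  have hren : rename (⇑ω) ((Matrix.vandermonde fun k : Fin n => (X k : MvPolynomial (Fin n) ℚ)).det)
      = ((Equiv.Perm.sign ω : ℤ) : MvPolynomial (Fin n) ℚ)
        * (Matrix.vandermonde fun k : Fin n => (X k : MvPolynomial (Fin n) ℚ)).det := by
    have h1 := (rename (⇑ω) : MvPolynomial (Fin n) ℚ →ₐ[ℚ] MvPolynomial (Fin n) ℚ).toRingHom.map_det
      (Matrix.vandermonde fun k : Fin n => (X k : MvPolynomial (Fin n) ℚ))
    rw [RingHom.mapMatrix_apply, hsub, Matrix.det_permute] at h1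
    refine h1.trans ?_
    rcases Int.units_eq_one_or (Equiv.Perm.sign ω) with h | h <;> rw [h] <;> push_cast <;>
      simp only [MvPolynomial.C_1, map_one, map_neg] <;> ring
  have hv : vand n = (-1 : MvPolynomial (Fin n) ℚ) ^ (∑ i : Fin n, (Finset.Ioi i).card)
      * (Matrix.vandermonde fun k : Fin n => (X k : MvPolynomial (Fin n) ℚ)).det :=
    hdet _
  rw [hv, map_mul, map_pow, map_neg, map_one, hren, MvPolynomial.smul_eq_C_mul]
  rcases Int.units_eq_one_or (Equiv.Perm.sign ω) with h | h <;> rw [h] <;> push_cast <;>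
    simp only [MvPolynomial.C_1, map_one, map_neg] <;> ring

lemma antiSum_rename {n : ℕ} (τ : Equiv.Perm (Fin n)) (f : MvPolynomial (Fin n) ℚ) :
    rename (⇑τ) (antiSum n f) = ((Equiv.Perm.sign τ : ℤ) : ℚ) • antiSum n f := by
  classical
  have hs : ∀ a b : Equiv.Perm (Fin n),
      ((Equiv.Perm.sign (a * b) : ℤ) : ℚ)
        = ((Equiv.Perm.sign a : ℤ) : ℚ) * ((Equiv.Perm.sign b : ℤ) : ℚ) := by
    intro a b
    rw [map_mul]
    push_cast
    ring
  have hss : ∀ a : Equiv.Perm (Fin n),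
      ((Equiv.Perm.sign a : ℤ) : ℚ) * ((Equiv.Perm.sign a : ℤ) : ℚ) = 1 := by
    intro a
    rcases Int.units_eq_one_or (Equiv.Perm.sign a) with h | h <;> rw [h] <;> norm_num
  unfold antiSum
  rw [map_sum, Finset.smul_sum]
  refine Fintype.sum_equiv (Equiv.mulLeft τ) _ _ fun ω => ?_
  rw [map_smul, rename_rename]
  have hco : (⇑τ) ∘ (⇑ω) = ⇑(τ * ω) := rfl
  rw [hco]
  simp only [Equiv.coe_mulLeft]
  rw [hs, smul_smul, ← mul_assoc, hss, one_mul]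

lemma antiSum_sub {n : ℕ} (f g : MvPolynomial (Fin n) ℚ) :
    antiSum n (f - g) = antiSum n f - antiSum n g := by
  unfold antiSum
  rw [← Finset.sum_sub_distrib]
  exact Finset.sum_congr rfl fun ω _ => by rw [map_sub, smul_sub]

lemma antiSum_swap {n : ℕ} {a b : Fin n} (hab : a ≠ b) (f : MvPolynomial (Fin n) ℚ) :
    rename (⇑(Equiv.swap a b)) (antiSum n f) = -antiSum n f := by
  rw [antiSum_rename, Equiv.Perm.sign_swap hab]
  push_cast
  simp



variable {N : ℕ}

noncomputable def Phi (b : Fin N) :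
    MvPolynomial (Fin N) ℚ ≃ₐ[ℚ] Polynomial (MvPolynomial {k : Fin N // k ≠ b} ℚ) :=
  (MvPolynomial.renameEquiv ℚ (Equiv.optionSubtypeNe b).symm).trans
    (MvPolynomial.optionEquivLeft ℚ {k : Fin N // k ≠ b})

lemma Phi_X_self (b : Fin N) : Phi b (X b) = Polynomial.X := by
  rw [Phi]
  simp only [AlgEquiv.trans_apply, MvPolynomial.renameEquiv_apply, rename_X]
  rw [Equiv.optionSubtypeNe_symm_self]
  exact MvPolynomial.optionEquivLeft_X_none _ _

lemma Phi_X_ne (b : Fin N) {a : Fin N} (hab : a ≠ b) :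
    Phi b (X a) = Polynomial.C (X ⟨a, hab⟩) := by
  rw [Phi]
  simp only [AlgEquiv.trans_apply, MvPolynomial.renameEquiv_apply, rename_X]
  rw [Equiv.optionSubtypeNe_symm_of_ne hab]
  exact MvPolynomial.optionEquivLeft_X_some _ _ _

lemma dvd_of_sub_eval {a b : Fin N} (hab : a ≠ b) {g : MvPolynomial (Fin N) ℚ}
    (h : (aeval (fun k => if k = b then X a else X k) g : MvPolynomial (Fin N) ℚ) = 0) :
    (X a - X b : MvPolynomial (Fin N) ℚ) ∣ g := by
  classical
  set xa : MvPolynomial {k : Fin N // k ≠ b} ℚ := X ⟨a, hab⟩ with hxa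
  set E : MvPolynomial (Fin N) ℚ →+* MvPolynomial {k : Fin N // k ≠ b} ℚ :=
    (Polynomial.evalRingHom xa).comp (Phi b).toRingEquiv.toRingHom with hE
  have hcomp : ((rename (Subtype.val : {k : Fin N // k ≠ b} → Fin N)).toRingHom).comp E
      = (aeval (fun k => if k = b then X a else X k) :
          MvPolynomial (Fin N) ℚ →ₐ[ℚ] MvPolynomial (Fin N) ℚ).toRingHom := by
    apply MvPolynomial.ringHom_ext
    · intro r
      simp only [RingHom.comp_apply, hE]
      rw [show (Phi b).toRingEquiv.toRingHom (C r) = Phi b (C r) from rfl]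
      rw [show (C r : MvPolynomial (Fin N) ℚ) = algebraMap ℚ _ r from rfl, AlgEquiv.commutes]
      simp [MvPolynomial.algebraMap_eq]
    · intro k
      simp only [RingHom.comp_apply, hE]
      by_cases hk : k = b
      · subst hk
        rw [show (Phi k).toRingEquiv.toRingHom (X k) = Phi k (X k) from rfl,
          Phi_X_self]
        simp [hxa]
      · rw [show (Phi b).toRingEquiv.toRingHom (X k) = Phi b (X k) from rfl,
          Phi_X_ne b hk]
        simp [hk]
  have hE0 : E g = 0 := by
    have h2 : rename (Subtype.val : {k : Fin N // k ≠ b} → Fin N) (E g) = 0 := by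
      have := congrArg (fun F => F g) hcomp
      simpa using this.trans h
    exact MvPolynomial.rename_injective _ Subtype.val_injective (by simpa using h2)
  have hroot : (Polynomial.X - Polynomial.C xa) ∣ Phi b g := by
    rw [Polynomial.dvd_iff_isRoot]
    exact hE0
  have hdvd2 : Phi b (X a - X b) ∣ Phi b g := by
    rw [map_sub, Phi_X_self, Phi_X_ne b hab, ← hxa]
    rw [show Polynomial.C xa - Polynomial.X = -(Polynomial.X - Polynomial.C xa) from by ring]
    exact (neg_dvd).2 hroot
  have := map_dvd (Phi b).symm hdvd2
  simpa using this

lemma prime_X_sub_X {a b : Fin N} (hab : a ≠ b) :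
    Prime (X a - X b : MvPolynomial (Fin N) ℚ) := by
  rw [← MulEquiv.prime_iff ((Phi b).toRingEquiv.toMulEquiv)]
  rw [show (Phi b).toRingEquiv.toMulEquiv (X a - X b) = Phi b (X a - X b) from rfl]
  rw [map_sub, Phi_X_self, Phi_X_ne b hab]
  rw [show (Polynomial.C (X ⟨a, hab⟩) - Polynomial.X :
      Polynomial (MvPolynomial {k : Fin N // k ≠ b} ℚ))
      = -(Polynomial.X - Polynomial.C (X ⟨a, hab⟩)) from by ring]
  exact (Polynomial.prime_X_sub_C _).neg

lemma not_dvd_pair {p q : Fin N × Fin N} (hp : p.1 < p.2) (hq : q.1 < q.2) (hne : p ≠ q) :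
    ¬ ((X p.1 - X p.2 : MvPolynomial (Fin N) ℚ) ∣ (X q.1 - X q.2)) := by
  classical
  rintro ⟨h, hh⟩
  set φ : MvPolynomial (Fin N) ℚ →ₐ[ℚ] MvPolynomial (Fin N) ℚ :=
    aeval (fun k => if k = p.2 then X p.1 else X k) with hφ
  have hzero : φ (X p.1 - X p.2) = 0 := by
    simp [hφ]
  have h1 : φ (X q.1 - X q.2) = 0 := by rw [hh, map_mul, hzero, zero_mul]
  simp only [hφ, map_sub, aeval_X] at h1
  rw [← apply_ite X _ p.1 q.1, ← apply_ite X _ p.1 q.2] at h1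
  have hpv : (p.1 : ℕ) < (p.2 : ℕ) := hp
  have hqv : (q.1 : ℕ) < (q.2 : ℕ) := hq
  have vne : ((p.1 : ℕ) ≠ (q.1 : ℕ)) ∨ ((p.2 : ℕ) ≠ (q.2 : ℕ)) := by
    by_contra hcc
    push_neg at hcc
    exact hne (Prod.ext (Fin.ext hcc.1) (Fin.ext hcc.2))
  have hne2 : (if q.1 = p.2 then p.1 else q.1) ≠ (if q.2 = p.2 then p.1 else q.2) := by
    split_ifs with h1q h2q h2q <;> intro hc
    · have e1 := congrArg Fin.val h1q
      have e2 := congrArg Fin.val h2q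
      omega
    · have e1 := congrArg Fin.val h1q
      have e2 := congrArg Fin.val hc
      omega
    · have e1 := congrArg Fin.val h2q
      have e2 := congrArg Fin.val hc
      rcases vne with hv | hv <;> omega
    · have e2 := congrArg Fin.val hc
      omega
  exact sub_ne_zero.2 (fun hXX => hne2 (MvPolynomial.X_injective hXX)) h1

lemma prod_pairs_dvd (s : Finset (Fin N × Fin N)) (hs : ∀ p ∈ s, p.1 < p.2)
    {g : MvPolynomial (Fin N) ℚ} (hd : ∀ p ∈ s, (X p.1 - X p.2 : MvPolynomial (Fin N) ℚ) ∣ g) :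
    (∏ p ∈ s, (X p.1 - X p.2 : MvPolynomial (Fin N) ℚ)) ∣ g := by
  classical
  induction s using Finset.cons_induction with
  | empty => simpa using one_dvd g
  | cons p s hp ih =>
    obtain ⟨h, rfl⟩ := ih (fun q hq => hs q (Finset.mem_cons_of_mem hq))
      (fun q hq => hd q (Finset.mem_cons_of_mem hq))
    have hprime : Prime (X p.1 - X p.2 : MvPolynomial (Fin N) ℚ) :=
      prime_X_sub_X (ne_of_lt (hs p (Finset.mem_cons_self _ _)))
    have hPd : (X p.1 - X p.2 : MvPolynomial (Fin N) ℚ)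
        ∣ (∏ q ∈ s, (X q.1 - X q.2 : MvPolynomial (Fin N) ℚ)) * h :=
      hd p (Finset.mem_cons_self _ _)
    have hnotprod : ¬ (X p.1 - X p.2 : MvPolynomial (Fin N) ℚ)
        ∣ ∏ q ∈ s, (X q.1 - X q.2 : MvPolynomial (Fin N) ℚ) := by
      intro hdp
      obtain ⟨q, hq, hdq⟩ := hprime.exists_mem_finset_dvd hdp
      exact not_dvd_pair (hs p (Finset.mem_cons_self _ _)) (hs q (Finset.mem_cons_of_mem hq))
        (fun hc => hp (hc ▸ hq)) hdq
    obtain ⟨h', rfl⟩ := (hprime.dvd_or_dvd hPd).resolve_left hnotprod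
    exact ⟨h', by rw [Finset.prod_cons]; ring⟩

lemma vand_dvd {g : MvPolynomial (Fin N) ℚ}
    (hswap : ∀ a b : Fin N, a < b → rename (⇑(Equiv.swap a b)) g = -g) :
    vand N ∣ g := by
  classical
  apply prod_pairs_dvd _ (fun p hp => (Finset.mem_filter.1 hp).2)
  intro p hp
  have hlt : p.1 < p.2 := (Finset.mem_filter.1 hp).2
  have hne : p.1 ≠ p.2 := ne_of_lt hlt
  apply dvd_of_sub_eval hne
  set F : Fin N → MvPolynomial (Fin N) ℚ := fun k => if k = p.2 then X p.1 else X k with hF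
  have hFs : F ∘ ⇑(Equiv.swap p.1 p.2) = F := by
    funext k
    by_cases hk1 : k = p.1
    · subst hk1
      simp [hF, Equiv.swap_apply_left, hne]
    · by_cases hk2 : k = p.2
      · subst hk2
        simp [hF, Equiv.swap_apply_right, hne]
      · simp [hF, Equiv.swap_apply_of_ne_of_ne hk1 hk2, hk1, hk2]
  have heq : aeval F g = -aeval F g := by
    have h3 : aeval F (rename (⇑(Equiv.swap p.1 p.2)) g) = aeval F g := by
      rw [aeval_rename, hFs]
    rw [hswap p.1 p.2 hlt, map_neg] at h3
    exact h3.symm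
  have h2 : (2 : MvPolynomial (Fin N) ℚ) * aeval F g = 0 := by
    rw [two_mul]
    nth_rewrite 1 [heq]
    rw [neg_add_cancel]
  rcases mul_eq_zero.1 h2 with h | h
  · exact absurd h (by norm_num)
  · exact h



variable {N : ℕ}

lemma totalDegree_linfac (i : Fin N) (c : ℚ) :
    (X i - C c : MvPolynomial (Fin N) ℚ).totalDegree ≤ 1 := by
  rw [sub_eq_add_neg]
  refine (MvPolynomial.totalDegree_add _ _).trans ?_
  rw [MvPolynomial.totalDegree_neg, MvPolynomial.totalDegree_X, MvPolynomial.totalDegree_C]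
  omega

lemma totalDegree_fall_le (i : Fin N) (m : ℕ) :
    (∏ k ∈ Finset.range m, (X i - C (k : ℚ)) : MvPolynomial (Fin N) ℚ).totalDegree ≤ m := by
  refine (MvPolynomial.totalDegree_finset_prod _ _).trans ?_
  calc ∑ k ∈ Finset.range m, (X i - C (k : ℚ) : MvPolynomial (Fin N) ℚ).totalDegree
      ≤ ∑ _k ∈ Finset.range m, 1 := Finset.sum_le_sum fun k _ => totalDegree_linfac i _
    _ = m := by simp

lemma fall_sub_pow_deg (i : Fin N) (m : ℕ) (hm : 1 ≤ m) :
    ((∏ k ∈ Finset.range m, (X i - C (k : ℚ))) - X i ^ m :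
      MvPolynomial (Fin N) ℚ).totalDegree < m := by
  induction m, hm using Nat.le_induction with
  | base =>
    have : (∏ k ∈ Finset.range 1, (X i - C (k : ℚ)) : MvPolynomial (Fin N) ℚ) = X i := by
      simp
    rw [this, pow_one, sub_self, MvPolynomial.totalDegree_zero]
    omega
  | succ m hm ih =>
    have hkey : (∏ k ∈ Finset.range (m + 1), (X i - C (k : ℚ))) - X i ^ (m + 1)
        = ((∏ k ∈ Finset.range m, (X i - C (k : ℚ))) - X i ^ m) * (X i - C (m : ℚ))
          + (-C (m : ℚ)) * X i ^ m := by
      rw [Finset.prod_range_succ, pow_succ]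
      ring
    rw [hkey]
    refine lt_of_le_of_lt (MvPolynomial.totalDegree_add _ _) (max_lt ?_ ?_)
    · refine lt_of_le_of_lt (MvPolynomial.totalDegree_mul _ _) ?_
      have h2 := totalDegree_linfac i (m : ℚ)
      omega
    · refine lt_of_le_of_lt (MvPolynomial.totalDegree_mul _ _) ?_
      have h1 : (-C (m:ℚ) : MvPolynomial (Fin N) ℚ).totalDegree = 0 := by
        rw [MvPolynomial.totalDegree_neg, MvPolynomial.totalDegree_C]
      have h2 : ((X i : MvPolynomial (Fin N) ℚ) ^ m).totalDegree ≤ m := by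
        refine (MvPolynomial.totalDegree_pow _ _).trans ?_
        rw [MvPolynomial.totalDegree_X]
        omega
      omega

lemma fallpow (lam : Fin N → ℕ) :
    fallProd N lam - powProd N lam = 0 ∨
      (fallProd N lam - powProd N lam).totalDegree < ∑ i : Fin N, lam i := by
  classical
  suffices H : ∀ s : Finset (Fin N),
      ((∏ i ∈ s, ∏ k ∈ Finset.range (lam i), (X i - C (k : ℚ)))
          - (∏ i ∈ s, (X i : MvPolynomial (Fin N) ℚ) ^ lam i) = 0) ∨
        ((∏ i ∈ s, ∏ k ∈ Finset.range (lam i), (X i - C (k : ℚ)))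
          - (∏ i ∈ s, (X i : MvPolynomial (Fin N) ℚ) ^ lam i)).totalDegree < ∑ i ∈ s, lam i by
    exact H Finset.univ
  intro s
  induction s using Finset.cons_induction with
  | empty => left; simp
  | cons c s hc ih =>
    rw [Finset.prod_cons, Finset.prod_cons, Finset.sum_cons]
    by_cases hlc : lam c = 0
    · rw [hlc]
      simp only [Finset.range_zero, Finset.prod_empty, one_mul, pow_zero, Nat.zero_add]
      exact ih
    · right
      have hlc1 : 1 ≤ lam c := Nat.one_le_iff_ne_zero.2 hlc
      have hkey : (∏ k ∈ Finset.range (lam c), (X c - C (k : ℚ)))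
            * (∏ i ∈ s, ∏ k ∈ Finset.range (lam i), (X i - C (k : ℚ)))
          - (X c : MvPolynomial (Fin N) ℚ) ^ lam c * ∏ i ∈ s, (X i : MvPolynomial (Fin N) ℚ) ^ lam i
        = (∏ k ∈ Finset.range (lam c), (X c - C (k : ℚ)))
            * ((∏ i ∈ s, ∏ k ∈ Finset.range (lam i), (X i - C (k : ℚ)))
              - ∏ i ∈ s, (X i : MvPolynomial (Fin N) ℚ) ^ lam i)
          + ((∏ k ∈ Finset.range (lam c), (X c - C (k : ℚ))) - X c ^ lam c)
            * ∏ i ∈ s, (X i : MvPolynomial (Fin N) ℚ) ^ lam i := by ring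
      rw [hkey]
      have hb : (∏ i ∈ s, (X i : MvPolynomial (Fin N) ℚ) ^ lam i).totalDegree ≤ ∑ i ∈ s, lam i := by
        refine (MvPolynomial.totalDegree_finset_prod _ _).trans (Finset.sum_le_sum fun i _ => ?_)
        refine (MvPolynomial.totalDegree_pow _ _).trans ?_
        rw [MvPolynomial.totalDegree_X]
        omega
      refine lt_of_le_of_lt (MvPolynomial.totalDegree_add _ _) (max_lt ?_ ?_)
      · rcases ih with h0 | hlt
        · rw [h0, mul_zero, MvPolynomial.totalDegree_zero]
          omega
        · refine lt_of_le_of_lt (MvPolynomial.totalDegree_mul _ _) ?_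
          have := totalDegree_fall_le c (lam c)
          omega
      · refine lt_of_le_of_lt (MvPolynomial.totalDegree_mul _ _) ?_
        have := fall_sub_pow_deg c (lam c) hlc1
        omega

lemma touch_card_eq {a b i j : Fin N} (hab : a ≠ b) (hij : i ≠ j) :
    ((Finset.univ.filter (fun p : Fin N × Fin N => p.1 < p.2)).filter
        (fun p => p.1 = a ∨ p.2 = a ∨ p.1 = b ∨ p.2 = b)).card
      = ((Finset.univ.filter (fun p : Fin N × Fin N => p.1 < p.2)).filter
        (fun p => p.1 = i ∨ p.2 = i ∨ p.1 = j ∨ p.2 = j)).card := by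
  classical
  obtain ⟨σ, hσa, hσb⟩ : ∃ σ : Equiv.Perm (Fin N), σ a = i ∧ σ b = j := by
    refine ⟨(Equiv.swap a i).trans (Equiv.swap ((Equiv.swap a i) b) j), ?_, ?_⟩
    · have h1 : (Equiv.swap a i) a = i := Equiv.swap_apply_left a i
      have hne1 : i ≠ (Equiv.swap a i) b := by
        intro hc
        exact hab (((Equiv.swap a i).injective (h1.trans hc)))
      simp only [Equiv.trans_apply, h1]
      exact Equiv.swap_apply_of_ne_of_ne hne1 hij
    · simp only [Equiv.trans_apply]
      exact Equiv.swap_apply_left _ j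
  refine Finset.card_bij' (fun p _ => if σ p.1 < σ p.2 then (σ p.1, σ p.2) else (σ p.2, σ p.1))
    (fun q _ => if σ.symm q.1 < σ.symm q.2 then (σ.symm q.1, σ.symm q.2)
      else (σ.symm q.2, σ.symm q.1)) ?_ ?_ ?_ ?_
  · -- membership forward
    intro p hp
    simp only [Finset.mem_filter, Finset.mem_univ, true_and] at hp ⊢
    obtain ⟨hlt, htouch⟩ := hp
    have hne : σ p.1 ≠ σ p.2 := fun hc => (ne_of_lt hlt) (σ.injective hc)
    constructor
    · split_ifs with h
      · exact h
      · exact (lt_or_gt_of_ne hne).resolve_left h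
    · have : σ p.1 = i ∨ σ p.2 = i ∨ σ p.1 = j ∨ σ p.2 = j := by
        rcases htouch with h | h | h | h
        · exact Or.inl (by rw [h, hσa])
        · exact Or.inr (Or.inl (by rw [h, hσa]))
        · exact Or.inr (Or.inr (Or.inl (by rw [h, hσb])))
        · exact Or.inr (Or.inr (Or.inr (by rw [h, hσb])))
      split_ifs with h
      · exact this
      · tauto
  · -- membership backward
    intro q hq
    simp only [Finset.mem_filter, Finset.mem_univ, true_and] at hq ⊢
    obtain ⟨hlt, htouch⟩ := hq
    have hne : σ.symm q.1 ≠ σ.symm q.2 := fun hc => (ne_of_lt hlt) (σ.symm.injective hc)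
    have hai : σ.symm i = a := by rw [← hσa, Equiv.symm_apply_apply]
    have hbj : σ.symm j = b := by rw [← hσb, Equiv.symm_apply_apply]
    constructor
    · split_ifs with h
      · exact h
      · exact (lt_or_gt_of_ne hne).resolve_left h
    · have : σ.symm q.1 = a ∨ σ.symm q.2 = a ∨ σ.symm q.1 = b ∨ σ.symm q.2 = b := by
        rcases htouch with h | h | h | h
        · exact Or.inl (by rw [h, hai])
        · exact Or.inr (Or.inl (by rw [h, hai]))
        · exact Or.inr (Or.inr (Or.inl (by rw [h, hbj])))
        · exact Or.inr (Or.inr (Or.inr (by rw [h, hbj])))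
      split_ifs with h
      · exact this
      · tauto
  · -- left inverse
    intro p hp
    simp only [Finset.mem_filter, Finset.mem_univ, true_and] at hp
    obtain ⟨hlt, -⟩ := hp
    by_cases h1 : σ p.1 < σ p.2
    · rw [if_pos h1]
      simp only [Equiv.symm_apply_apply]
      rw [if_pos hlt]
    · rw [if_neg h1]
      simp only [Equiv.symm_apply_apply]
      rw [if_neg (asymm hlt)]
  · -- right inverse
    intro q hq
    simp only [Finset.mem_filter, Finset.mem_univ, true_and] at hq
    obtain ⟨hlt, -⟩ := hq
    by_cases h1 : σ.symm q.1 < σ.symm q.2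
    · rw [if_pos h1]
      simp only [Equiv.apply_symm_apply]
      rw [if_pos hlt]
    · rw [if_neg h1]
      simp only [Equiv.apply_symm_apply]
      rw [if_neg (asymm hlt)]


lemma sum_ind {α : Type*} (s : Finset α) (P : α → Prop) [DecidablePred P] :
    ∑ p ∈ s, (if P p then (1:ℕ) else 0) = (s.filter P).card := by
  simp [Finset.sum_boole]

end SSaux

/-- the polynomials `P*_{λ|n}` and `P_{λ|n}` exist, i.e. the antisymmetrized
sums are divisible by `(n - l)! · V`, and `P*_{λ|n} - P_{λ|n}` is a supersymmetric
polynomial of total degree strictly less than `|λ|`. Here the strict partition `λ` with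
`1 ≤ l(λ) = l ≤ n` is encoded as `lam : Fin n → ℕ`, strictly decreasing and positive on
the first `l` coordinates and zero on the rest. -/
theorem exists_Pstar_P_and_diff_supersymmetric
    (n l : ℕ) (hl : 1 ≤ l) (hln : l ≤ n) (lam : Fin n → ℕ)
    (hpos : ∀ i : Fin n, 0 < lam i ↔ (i : ℕ) < l)
    (hdec : ∀ i j : Fin n, i < j → (j : ℕ) < l → lam j < lam i) :
    ∃ Pstar P : MvPolynomial (Fin n) ℚ,
      (Nat.factorial (n - l) : ℚ) • (vand n * Pstar) =
        antiSum n (fallProd n lam * prodPlus n l * prodMinus n l) ∧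
      (Nat.factorial (n - l) : ℚ) • (vand n * P) =
        antiSum n (powProd n lam * prodPlus n l * prodMinus n l) ∧
      IsSupersymmetric (Pstar - P) ∧
      (Pstar - P).totalDegree < ∑ i : Fin n, lam i := by
  classical
  have hn : 0 < n := lt_of_lt_of_le hl hln
  have hKne : (Nat.factorial (n - l) : ℚ) ≠ 0 :=
    Nat.cast_ne_zero.2 (Nat.factorial_ne_zero _)
  obtain ⟨Q1, hQ1⟩ := SSaux.vand_dvd
    (g := antiSum n (fallProd n lam * prodPlus n l * prodMinus n l))
    (fun a b hab => SSaux.antiSum_swap (ne_of_lt hab) _)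
  obtain ⟨Q2, hQ2⟩ := SSaux.vand_dvd
    (g := antiSum n (powProd n lam * prodPlus n l * prodMinus n l))
    (fun a b hab => SSaux.antiSum_swap (ne_of_lt hab) _)
  have hvand_ne : vand n ≠ 0 := by
    unfold vand
    refine Finset.prod_ne_zero_iff.2 fun p hp => ?_
    exact SSaux.X_sub_X_ne (ne_of_lt (Finset.mem_filter.1 hp).2)
  set K : ℚ := (Nat.factorial (n - l) : ℚ) with hKdef
  set E : MvPolynomial (Fin n) ℚ :=
    (fallProd n lam - powProd n lam) * (prodPlus n l * prodMinus n l) with hEdef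
  have hID : vand n * (K⁻¹ • Q1 - K⁻¹ • Q2) = K⁻¹ • antiSum n E := by
    have hEeq : fallProd n lam * prodPlus n l * prodMinus n l
        - powProd n lam * prodPlus n l * prodMinus n l = E := by
      rw [hEdef]; ring
    rw [mul_sub, mul_smul_comm, mul_smul_comm, ← hQ1, ← hQ2, ← smul_sub,
      ← SSaux.antiSum_sub, hEeq]
  have hsymm : ∀ ω : Equiv.Perm (Fin n),
      rename (⇑ω) (K⁻¹ • Q1 - K⁻¹ • Q2) = K⁻¹ • Q1 - K⁻¹ • Q2 := by
    intro ω
    have hss : ((Equiv.Perm.sign ω : ℤ) : ℚ) * ((Equiv.Perm.sign ω : ℤ) : ℚ) = 1 := by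
      rcases Int.units_eq_one_or (Equiv.Perm.sign ω) with h | h <;> rw [h] <;> norm_num
    have h2 := congrArg (rename (⇑ω)) hID
    rw [map_mul, SSaux.rename_vand, map_smul, SSaux.antiSum_rename, smul_mul_assoc] at h2
    have h3 := congrArg (fun z => ((Equiv.Perm.sign ω : ℤ) : ℚ) • z) h2
    simp only [smul_smul] at h3
    rw [hss, one_smul] at h3
    -- h3 : vand n * rename ω D = (s * K⁻¹ * s) • antiSum E
    have h4 : vand n * rename (⇑ω) (K⁻¹ • Q1 - K⁻¹ • Q2)
        = vand n * (K⁻¹ • Q1 - K⁻¹ • Q2) := by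
      rw [h3, hID]
      rw [show ((Equiv.Perm.sign ω : ℤ) : ℚ) * (K⁻¹ * ((Equiv.Perm.sign ω : ℤ) : ℚ)) =
        ((Equiv.Perm.sign ω : ℤ) : ℚ) * ((Equiv.Perm.sign ω : ℤ) : ℚ) * K⁻¹ from by ring, hss,
        one_mul]
    exact mul_left_cancel₀ hvand_ne h4
  refine ⟨K⁻¹ • Q1, K⁻¹ • Q2, ?_, ?_, ⟨hsymm, ?_⟩, ?_⟩
  · rw [mul_smul_comm, smul_smul, mul_inv_cancel₀ hKne, one_smul]
    exact hQ1.symm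
  · rw [mul_smul_comm, smul_smul, mul_inv_cancel₀ hKne, one_smul]
    exact hQ2.symm
  · -- supersymmetric evaluation part
    intro i j hij s t
    have hijne : i ≠ j := ne_of_lt hij
    have hvij : (i : ℕ) < (j : ℕ) := hij
    set G : Fin n → MvPolynomial (Fin n) ℚ := fun k => if k = j then -X i else X k with hGdef
    have hGj : G j = -X i := by rw [hGdef]; simp
    have hGi : G i = X i := by rw [hGdef]; simp [hijne]
    have hGo : ∀ k, k ≠ j → G k = X k := fun k hk => by rw [hGdef]; simp [hk]
    set χ : MvPolynomial (Fin n) ℚ →ₐ[ℚ] MvPolynomial (Fin n) ℚ := aeval G with hχdef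
    have hGfac : ∀ p : Fin n × Fin n, p.1 < p.2 →
        (G p.1 - G p.2 ≠ 0 ∧ degreeOf i (G p.1 - G p.2)
          = (if p.1 = i ∨ p.2 = i ∨ p.1 = j ∨ p.2 = j then 1 else 0)) := by
      intro p hplt
      have hpne : p.1 ≠ p.2 := ne_of_lt hplt
      have hvp : (p.1 : ℕ) < (p.2 : ℕ) := hplt
      by_cases h1j : p.1 = j
      · have e1 := congrArg Fin.val h1j
        have h2j : p.2 ≠ j := fun hc => by
          have := congrArg Fin.val hc; omega
        have h2i : p.2 ≠ i := fun hc => by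
          have := congrArg Fin.val hc; omega
        have he : G p.1 - G p.2 = -(X i + X p.2) := by
          rw [h1j, hGj, hGo p.2 h2j]; ring
        constructor
        · rw [he]
          exact neg_ne_zero.2 (SSaux.X_add_X_ne h2i.symm)
        · rw [he, SSaux.degreeOf_neg, SSaux.degreeOf_X_add_X h2i.symm,
            if_pos (Or.inl rfl), if_pos (Or.inr (Or.inr (Or.inl h1j)))]
      · by_cases h2j : p.2 = j
        · by_cases h1i : p.1 = i
          · have he : G p.1 - G p.2 = X i + X i := by
              rw [h1i, h2j, hGi, hGj, sub_neg_eq_add]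
            constructor
            · rw [he]; exact SSaux.X_add_X_self_ne i
            · rw [he, SSaux.degreeOf_X_add_X_self, if_pos rfl, if_pos (Or.inl h1i)]
          · have he : G p.1 - G p.2 = X p.1 + X i := by
              rw [h2j, hGo p.1 h1j, hGj, sub_neg_eq_add]
            constructor
            · rw [he]; exact SSaux.X_add_X_ne h1i
            · rw [he, SSaux.degreeOf_X_add_X h1i, if_pos (Or.inr rfl),
                if_pos (Or.inr (Or.inr (Or.inr h2j)))]
        · have he : G p.1 - G p.2 = X p.1 - X p.2 := by
            rw [hGo p.1 h1j, hGo p.2 h2j]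
          constructor
          · rw [he]; exact SSaux.X_sub_X_ne hpne
          · rw [he, SSaux.degreeOf_X_sub_X hpne]
            by_cases hc1 : p.1 = i
            · rw [if_pos (Or.inl hc1.symm), if_pos (Or.inl hc1)]
            · by_cases hc2 : p.2 = i
              · rw [if_pos (Or.inr hc2.symm), if_pos (Or.inr (Or.inl hc2))]
              · rw [if_neg, if_neg]
                · rintro (h | h | h | h)
                  · exact hc1 h
                  · exact hc2 h
                  · exact h1j h
                  · exact h2j h
                · rintro (h | h)
                  · exact hc1 h.symm
                  · exact hc2 h.symm
    have hχv : χ (vand n)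
        = ∏ p ∈ Finset.univ.filter (fun p : Fin n × Fin n => p.1 < p.2), (G p.1 - G p.2) := by
      unfold vand
      rw [map_prod]
      refine Finset.prod_congr rfl fun p _ => ?_
      rw [map_sub, hχdef, aeval_X, aeval_X]
    have hχv_ne : χ (vand n) ≠ 0 := by
      rw [hχv]
      exact Finset.prod_ne_zero_iff.2
        fun p hp => (hGfac p (Finset.mem_filter.1 hp).2).1
    have hχv_deg : degreeOf i (χ (vand n))
        = ∑ p ∈ Finset.univ.filter (fun p : Fin n × Fin n => p.1 < p.2),
          (if p.1 = i ∨ p.2 = i ∨ p.1 = j ∨ p.2 = j then (1:ℕ) else 0) := by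
      rw [hχv, SSaux.degreeOf_prod_eq i _ _ (fun p hp => (hGfac p (Finset.mem_filter.1 hp).2).1)]
      exact Finset.sum_congr rfl fun p hp => (hGfac p (Finset.mem_filter.1 hp).2).2
    have hdisj : Disjoint
        (Finset.univ.filter (fun p : Fin n × Fin n => (p.1 : ℕ) < l ∧ p.1 < p.2))
        (Finset.univ.filter (fun p : Fin n × Fin n => l ≤ (p.1 : ℕ) ∧ p.1 < p.2)) := by
      rw [Finset.disjoint_left]
      intro p hp1 hp2
      simp only [Finset.mem_filter, Finset.mem_univ, true_and] at hp1 hp2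
      omega
    have hunion :
        (Finset.univ.filter (fun p : Fin n × Fin n => (p.1 : ℕ) < l ∧ p.1 < p.2))
          ∪ (Finset.univ.filter (fun p : Fin n × Fin n => l ≤ (p.1 : ℕ) ∧ p.1 < p.2))
        = Finset.univ.filter (fun p : Fin n × Fin n => p.1 < p.2) := by
      ext p
      simp only [Finset.mem_union, Finset.mem_filter, Finset.mem_univ, true_and]
      constructor
      · rintro (⟨-, h⟩ | ⟨-, h⟩) <;> exact h
      · intro h
        by_cases hc : (p.1 : ℕ) < l
        · exact Or.inl ⟨hc, h⟩
        · exact Or.inr ⟨by omega, h⟩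
    have hPPfac : ∀ ω : Equiv.Perm (Fin n), χ (rename (⇑ω) (prodPlus n l))
        = ∏ p ∈ Finset.univ.filter (fun p : Fin n × Fin n => (p.1 : ℕ) < l ∧ p.1 < p.2),
          (G (ω p.1) + G (ω p.2)) := by
      intro ω
      unfold prodPlus
      rw [map_prod, map_prod]
      refine Finset.prod_congr rfl fun p _ => ?_
      rw [map_add, rename_X, rename_X, map_add, hχdef, aeval_X, aeval_X]
    have hPMfac : ∀ ω : Equiv.Perm (Fin n), χ (rename (⇑ω) (prodMinus n l))
        = ∏ p ∈ Finset.univ.filter (fun p : Fin n × Fin n => l ≤ (p.1 : ℕ) ∧ p.1 < p.2),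
          (G (ω p.1) - G (ω p.2)) := by
      intro ω
      unfold prodMinus
      rw [map_prod, map_prod]
      refine Finset.prod_congr rfl fun p _ => ?_
      rw [map_sub, rename_X, rename_X, map_sub, hχdef, aeval_X, aeval_X]
    have hterm : ∀ ω : Equiv.Perm (Fin n),
        degreeOf i (χ (rename (⇑ω) E)) ≤ degreeOf i (χ (vand n)) := by
      intro ω
      have hωa : ω (ω.symm i) = i := Equiv.apply_symm_apply ω i
      have hωb : ω (ω.symm j) = j := Equiv.apply_symm_apply ω j
      set a := ω.symm i with hadef
      set b := ω.symm j with hbdef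
      have hab : a ≠ b := fun hc => hijne (by rw [← hωa, hc, hωb])
      have hEmul : χ (rename (⇑ω) E) = χ (rename (⇑ω) (fallProd n lam - powProd n lam))
          * (χ (rename (⇑ω) (prodPlus n l)) * χ (rename (⇑ω) (prodMinus n l))) := by
        rw [hEdef]
        simp only [map_mul]
      by_cases hsurv : l ≤ (a : ℕ) ∧ l ≤ (b : ℕ)
      · obtain ⟨hal, hbl⟩ := hsurv
        have hvarsF : ∀ k ∈ (fallProd n lam - powProd n lam).vars, (k : ℕ) < l := by
          intro k hk
          have hk2 := MvPolynomial.vars_sub_subset (p := fallProd n lam) (q := powProd n lam) hk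
          rcases Finset.mem_union.1 hk2 with hk3 | hk3
          · unfold fallProd at hk3
            obtain ⟨i0, -, hky⟩ := Finset.mem_biUnion.1 (MvPolynomial.vars_prod _ hk3)
            by_cases hm : lam i0 = 0
            · rw [hm] at hky
              simp at hky
            · obtain ⟨c, -, hkc⟩ := Finset.mem_biUnion.1 (MvPolynomial.vars_prod _ hky)
              have hk4 := MvPolynomial.vars_sub_subset (p := X i0) (q := C (c : ℚ)) hkc
              rcases Finset.mem_union.1 hk4 with hk5 | hk5
              · rw [MvPolynomial.vars_X] at hk5
                rw [Finset.mem_singleton.1 hk5]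
                exact (hpos i0).1 (Nat.pos_of_ne_zero hm)
              · rw [MvPolynomial.vars_C] at hk5
                simp at hk5
          · unfold powProd at hk3
            obtain ⟨i0, -, hky⟩ := Finset.mem_biUnion.1 (MvPolynomial.vars_prod _ hk3)
            by_cases hm : lam i0 = 0
            · rw [hm, pow_zero] at hky
              simp at hky
            · have hk5 := MvPolynomial.vars_pow (X i0) (lam i0) hky
              rw [MvPolynomial.vars_X] at hk5
              rw [Finset.mem_singleton.1 hk5]
              exact (hpos i0).1 (Nat.pos_of_ne_zero hm)
        have hrenF : ∀ k ∈ (rename (⇑ω) (fallProd n lam - powProd n lam)).vars,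
            k ≠ i ∧ k ≠ j := by
          intro k hk
          obtain ⟨k0, hk0, rfl⟩ := Finset.mem_image.1 (MvPolynomial.vars_rename _ _ hk)
          have hk0l := hvarsF k0 hk0
          constructor
          · intro hc
            have : k0 = a := by
              apply ω.injective
              rw [hωa, hc]
            rw [this] at hk0l
            omega
          · intro hc
            have : k0 = b := by
              apply ω.injective
              rw [hωb, hc]
            rw [this] at hk0l
            omega
        have hFfix : χ (rename (⇑ω) (fallProd n lam - powProd n lam))
            = rename (⇑ω) (fallProd n lam - powProd n lam) := by
          rw [hχdef]
          exact SSaux.aeval_fix _ _ (fun k hk => hGo k (hrenF k hk).2)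
        have hFdeg0 : degreeOf i (χ (rename (⇑ω) (fallProd n lam - powProd n lam))) = 0 := by
          rw [hFfix]
          exact SSaux.degreeOf_eq_zero_of_not_mem_vars (fun hk => (hrenF i hk).1 rfl)
        have huntouch : ∀ p : Fin n × Fin n, p.1 < p.2 →
            ¬(p.1 = a ∨ p.2 = a ∨ p.1 = b ∨ p.2 = b) →
            (ω p.1 ≠ i ∧ ω p.1 ≠ j ∧ ω p.2 ≠ i ∧ ω p.2 ≠ j ∧ ω p.1 ≠ ω p.2) := by
          intro p hplt hnt
          push_neg at hnt
          obtain ⟨h1, h2, h3, h4⟩ := hnt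
          refine ⟨?_, ?_, ?_, ?_, fun hc => (ne_of_lt hplt) (ω.injective hc)⟩
          · intro hc
            exact h1 (ω.injective (by rw [hωa, hc]))
          · intro hc
            exact h3 (ω.injective (by rw [hωb, hc]))
          · intro hc
            exact h2 (ω.injective (by rw [hωa, hc]))
          · intro hc
            exact h4 (ω.injective (by rw [hωb, hc]))
        have hGdegle : ∀ u : Fin n, degreeOf i (G u) ≤ 1 := by
          intro u
          by_cases hu : u = j
          · rw [hu, hGj, SSaux.degreeOf_neg, MvPolynomial.degreeOf_X]
            split <;> omega
          · rw [hGo u hu, MvPolynomial.degreeOf_X]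
            split <;> omega
        have hplusb : ∀ p : Fin n × Fin n, p.1 < p.2 →
            degreeOf i (G (ω p.1) + G (ω p.2))
              ≤ (if p.1 = a ∨ p.2 = a ∨ p.1 = b ∨ p.2 = b then (1:ℕ) else 0) := by
          intro p hplt
          by_cases ht : p.1 = a ∨ p.2 = a ∨ p.1 = b ∨ p.2 = b
          · rw [if_pos ht]
            exact (degreeOf_add_le _ _ _).trans (max_le (hGdegle _) (hGdegle _))
          · rw [if_neg ht]
            obtain ⟨e1, e2, e3, e4, e5⟩ := huntouch p hplt ht
            rw [hGo _ e2, hGo _ e4, SSaux.degreeOf_X_add_X e5, if_neg]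
            rintro (h | h)
            · exact e1 h.symm
            · exact e3 h.symm
        have hminusb : ∀ p : Fin n × Fin n, p.1 < p.2 →
            degreeOf i (G (ω p.1) - G (ω p.2))
              ≤ (if p.1 = a ∨ p.2 = a ∨ p.1 = b ∨ p.2 = b then (1:ℕ) else 0) := by
          intro p hplt
          by_cases ht : p.1 = a ∨ p.2 = a ∨ p.1 = b ∨ p.2 = b
          · rw [if_pos ht, sub_eq_add_neg]
            refine (degreeOf_add_le _ _ _).trans (max_le (hGdegle _) ?_)
            rw [SSaux.degreeOf_neg]
            exact hGdegle _
          · rw [if_neg ht]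
            obtain ⟨e1, e2, e3, e4, e5⟩ := huntouch p hplt ht
            rw [hGo _ e2, hGo _ e4, SSaux.degreeOf_X_sub_X e5, if_neg]
            rintro (h | h)
            · exact e1 h.symm
            · exact e3 h.symm
        have hPPle : degreeOf i (χ (rename (⇑ω) (prodPlus n l)))
            ≤ ∑ p ∈ Finset.univ.filter (fun p : Fin n × Fin n => (p.1 : ℕ) < l ∧ p.1 < p.2),
              (if p.1 = a ∨ p.2 = a ∨ p.1 = b ∨ p.2 = b then (1:ℕ) else 0) := by
          rw [hPPfac ω]
          exact (SSaux.degreeOf_prod_le _ _ _).trans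
            (Finset.sum_le_sum fun p hp => hplusb p (Finset.mem_filter.1 hp).2.2)
        have hPMle : degreeOf i (χ (rename (⇑ω) (prodMinus n l)))
            ≤ ∑ p ∈ Finset.univ.filter (fun p : Fin n × Fin n => l ≤ (p.1 : ℕ) ∧ p.1 < p.2),
              (if p.1 = a ∨ p.2 = a ∨ p.1 = b ∨ p.2 = b then (1:ℕ) else 0) := by
          rw [hPMfac ω]
          exact (SSaux.degreeOf_prod_le _ _ _).trans
            (Finset.sum_le_sum fun p hp => hminusb p (Finset.mem_filter.1 hp).2.2)
        have hs2 : (∑ p ∈ Finset.univ.filter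
                (fun p : Fin n × Fin n => (p.1 : ℕ) < l ∧ p.1 < p.2),
              (if p.1 = a ∨ p.2 = a ∨ p.1 = b ∨ p.2 = b then (1:ℕ) else 0))
            + (∑ p ∈ Finset.univ.filter
                (fun p : Fin n × Fin n => l ≤ (p.1 : ℕ) ∧ p.1 < p.2),
              (if p.1 = a ∨ p.2 = a ∨ p.1 = b ∨ p.2 = b then (1:ℕ) else 0))
            = ∑ p ∈ Finset.univ.filter (fun p : Fin n × Fin n => p.1 < p.2),
              (if p.1 = a ∨ p.2 = a ∨ p.1 = b ∨ p.2 = b then (1:ℕ) else 0) := by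
          rw [← hunion, Finset.sum_union hdisj]
        have hcard : (∑ p ∈ Finset.univ.filter (fun p : Fin n × Fin n => p.1 < p.2),
              (if p.1 = a ∨ p.2 = a ∨ p.1 = b ∨ p.2 = b then (1:ℕ) else 0))
            = ∑ p ∈ Finset.univ.filter (fun p : Fin n × Fin n => p.1 < p.2),
              (if p.1 = i ∨ p.2 = i ∨ p.1 = j ∨ p.2 = j then (1:ℕ) else 0) := by
          rw [SSaux.sum_ind, SSaux.sum_ind]
          exact SSaux.touch_card_eq hab hijne
        have t1 := degreeOf_mul_le i (χ (rename (⇑ω) (fallProd n lam - powProd n lam)))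
          (χ (rename (⇑ω) (prodPlus n l)) * χ (rename (⇑ω) (prodMinus n l)))
        have t2 := degreeOf_mul_le i (χ (rename (⇑ω) (prodPlus n l)))
          (χ (rename (⇑ω) (prodMinus n l)))
        rw [hEmul, hχv_deg]
        omega
      · push_neg at hsurv
        rcases lt_or_gt_of_ne hab with hltab | hltab
        · have hva : (a : ℕ) < (b : ℕ) := hltab
          have hq : ((a, b) : Fin n × Fin n) ∈ Finset.univ.filter
              (fun p : Fin n × Fin n => (p.1 : ℕ) < l ∧ p.1 < p.2) := by
            simp only [Finset.mem_filter, Finset.mem_univ, true_and]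
            refine ⟨?_, hltab⟩
            by_cases hla : l ≤ (a : ℕ)
            · have := hsurv hla
              omega
            · omega
          have hz : G (ω a) + G (ω b) = 0 := by
            rw [hωa, hωb, hGi, hGj]
            ring
          have h0 : χ (rename (⇑ω) (prodPlus n l)) = 0 := by
            rw [hPPfac ω]
            exact Finset.prod_eq_zero hq hz
          rw [hEmul, h0, zero_mul, mul_zero]
          simp
        · have hva : (b : ℕ) < (a : ℕ) := hltab
          have hq : ((b, a) : Fin n × Fin n) ∈ Finset.univ.filter
              (fun p : Fin n × Fin n => (p.1 : ℕ) < l ∧ p.1 < p.2) := by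
            simp only [Finset.mem_filter, Finset.mem_univ, true_and]
            refine ⟨?_, hltab⟩
            by_cases hla : l ≤ (a : ℕ)
            · have := hsurv hla
              omega
            · omega
          have hz : G (ω b) + G (ω a) = 0 := by
            rw [hωa, hωb, hGi, hGj]
            ring
          have h0 : χ (rename (⇑ω) (prodPlus n l)) = 0 := by
            rw [hPPfac ω]
            exact Finset.prod_eq_zero hq hz
          rw [hEmul, h0, zero_mul, mul_zero]
          simp
    have hsum : degreeOf i (χ (antiSum n E)) ≤ degreeOf i (χ (vand n)) := by
      unfold antiSum
      rw [map_sum]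
      refine SSaux.degreeOf_sum_le i _ _ (fun ω _ => ?_)
      rw [map_smul]
      exact (SSaux.degreeOf_smul_le _ _ _).trans (hterm ω)
    have hχD0 : degreeOf i (χ (K⁻¹ • Q1 - K⁻¹ • Q2)) = 0 := by
      by_cases h0 : χ (K⁻¹ • Q1 - K⁻¹ • Q2) = 0
      · rw [h0]
        simp
      · have hmul := congrArg χ hID
        rw [map_mul, map_smul] at hmul
        have heq := SSaux.degreeOf_mul_eq i hχv_ne h0
        have hle : degreeOf i (χ (vand n) * χ (K⁻¹ • Q1 - K⁻¹ • Q2))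
            ≤ degreeOf i (χ (vand n)) := by
          rw [hmul]
          exact (SSaux.degreeOf_smul_le _ _ _).trans hsum
        omega
    have hivars : i ∉ (χ (K⁻¹ • Q1 - K⁻¹ • Q2)).vars :=
      SSaux.not_mem_vars_of_degreeOf_zero hχD0
    have hcomp : ∀ u : ℚ,
        aeval (fun k : Fin n => if k = i then C u else if k = j then C (-u) else X k)
            (K⁻¹ • Q1 - K⁻¹ • Q2)
          = aeval (fun k : Fin n => if k = i then C u else X k)
            (χ (K⁻¹ • Q1 - K⁻¹ • Q2)) := by
      intro u
      have hc := MvPolynomial.comp_aeval (f := G)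
        (φ := (aeval (fun k : Fin n => if k = i then C u else X k) :
          MvPolynomial (Fin n) ℚ →ₐ[ℚ] MvPolynomial (Fin n) ℚ))
      have hfun : (fun k : Fin n =>
            aeval (fun k' : Fin n => if k' = i then C u else X k') (G k))
          = fun k : Fin n => if k = i then C u else if k = j then C (-u) else X k := by
        funext k
        by_cases hk : k = j
        · rw [hk, hGj, map_neg, aeval_X, if_pos rfl, if_neg (Ne.symm hijne), if_pos rfl,
            map_neg]
        · by_cases hki : k = i
          · rw [hki, hGi, aeval_X, if_pos rfl, if_pos rfl]
          · rw [hGo k hk, aeval_X, if_neg hki, if_neg hki, if_neg hk]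
      rw [hfun] at hc
      rw [← hc]
      rfl
    rw [hcomp s, hcomp t,
      SSaux.aeval_fix _ _ (fun k hk => if_neg (fun hc : k = i => hivars (hc ▸ hk))),
      SSaux.aeval_fix _ _ (fun k hk => if_neg (fun hc : k = i => hivars (hc ▸ hk)))]
  · -- total degree part
    have hL1 : 1 ≤ ∑ i : Fin n, lam i := by
      have h0l : 0 < lam ⟨0, hn⟩ := (hpos ⟨0, hn⟩).2 (by show 0 < l; omega)
      calc 1 ≤ lam ⟨0, hn⟩ := h0l
        _ ≤ ∑ i : Fin n, lam i :=
          Finset.single_le_sum (fun i _ => Nat.zero_le _) (Finset.mem_univ _)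
    by_cases hD0 : K⁻¹ • Q1 - K⁻¹ • Q2 = 0
    · rw [hD0, MvPolynomial.totalDegree_zero]
      omega
    rcases SSaux.fallpow lam with hF0 | hFdeg
    · exfalso
      have hE0 : E = 0 := by rw [hEdef, hF0, zero_mul]
      have hAS0 : antiSum n E = 0 := by
        rw [hE0]
        simp [antiSum]
      have := hID
      rw [hAS0, smul_zero] at this
      rcases mul_eq_zero.1 this with h | h
      · exact hvand_ne h
      · exact hD0 h
    · have hdegvand : (vand n).totalDegree
          = (Finset.univ.filter (fun p : Fin n × Fin n => p.1 < p.2)).card := by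
        unfold vand
        rw [SSaux.totalDegree_prod_eq _ _
          (fun p hp => SSaux.X_sub_X_ne (ne_of_lt (Finset.mem_filter.1 hp).2))]
        rw [Finset.sum_congr rfl
          (fun p hp => SSaux.totalDegree_X_sub_X (ne_of_lt (Finset.mem_filter.1 hp).2))]
        simp
      have hdisj : Disjoint
          (Finset.univ.filter (fun p : Fin n × Fin n => (p.1 : ℕ) < l ∧ p.1 < p.2))
          (Finset.univ.filter (fun p : Fin n × Fin n => l ≤ (p.1 : ℕ) ∧ p.1 < p.2)) := by
        rw [Finset.disjoint_left]
        intro p hp1 hp2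
        simp only [Finset.mem_filter, Finset.mem_univ, true_and] at hp1 hp2
        omega
      have hunion :
          (Finset.univ.filter (fun p : Fin n × Fin n => (p.1 : ℕ) < l ∧ p.1 < p.2))
            ∪ (Finset.univ.filter (fun p : Fin n × Fin n => l ≤ (p.1 : ℕ) ∧ p.1 < p.2))
          = Finset.univ.filter (fun p : Fin n × Fin n => p.1 < p.2) := by
        ext p
        simp only [Finset.mem_union, Finset.mem_filter, Finset.mem_univ, true_and]
        constructor
        · rintro (⟨-, h⟩ | ⟨-, h⟩) <;> exact h
        · intro h
          by_cases hc : (p.1 : ℕ) < l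
          · exact Or.inl ⟨hc, h⟩
          · exact Or.inr ⟨by omega, h⟩
      have hdegPP : (prodPlus n l).totalDegree
          ≤ (Finset.univ.filter (fun p : Fin n × Fin n => (p.1 : ℕ) < l ∧ p.1 < p.2)).card := by
        unfold prodPlus
        refine (MvPolynomial.totalDegree_finset_prod _ _).trans ?_
        calc ∑ p ∈ Finset.univ.filter (fun p : Fin n × Fin n => (p.1 : ℕ) < l ∧ p.1 < p.2),
              (X p.1 + X p.2 : MvPolynomial (Fin n) ℚ).totalDegree
            ≤ ∑ _p ∈ Finset.univ.filter (fun p : Fin n × Fin n => (p.1 : ℕ) < l ∧ p.1 < p.2),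
              1 := by
              refine Finset.sum_le_sum fun p _ => ?_
              refine (MvPolynomial.totalDegree_add _ _).trans ?_
              rw [MvPolynomial.totalDegree_X, MvPolynomial.totalDegree_X]
              omega
          _ = _ := by simp
      have hdegPM : (prodMinus n l).totalDegree
          ≤ (Finset.univ.filter (fun p : Fin n × Fin n => l ≤ (p.1 : ℕ) ∧ p.1 < p.2)).card := by
        unfold prodMinus
        refine (MvPolynomial.totalDegree_finset_prod _ _).trans ?_
        calc ∑ p ∈ Finset.univ.filter (fun p : Fin n × Fin n => l ≤ (p.1 : ℕ) ∧ p.1 < p.2),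
              (X p.1 - X p.2 : MvPolynomial (Fin n) ℚ).totalDegree
            ≤ ∑ _p ∈ Finset.univ.filter (fun p : Fin n × Fin n => l ≤ (p.1 : ℕ) ∧ p.1 < p.2),
              1 := by
              refine Finset.sum_le_sum fun p hp => ?_
              exact le_of_eq (SSaux.totalDegree_X_sub_X
                (ne_of_lt (Finset.mem_filter.1 hp).2.2))
          _ = _ := by simp
      have hdegB : (prodPlus n l * prodMinus n l).totalDegree
          ≤ (Finset.univ.filter (fun p : Fin n × Fin n => p.1 < p.2)).card := by
        refine (MvPolynomial.totalDegree_mul _ _).trans ?_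
        rw [← hunion, Finset.card_union_of_disjoint hdisj]
        omega
      have h2 : (vand n * (K⁻¹ • Q1 - K⁻¹ • Q2)).totalDegree
          ≤ (antiSum n E).totalDegree := by
        rw [hID]
        exact MvPolynomial.totalDegree_smul_le _ _
      have h3 : (antiSum n E).totalDegree ≤ E.totalDegree := by
        unfold antiSum
        refine (MvPolynomial.totalDegree_finset_sum _ _).trans (Finset.sup_le fun ω _ => ?_)
        exact (MvPolynomial.totalDegree_smul_le _ _).trans (MvPolynomial.totalDegree_rename_le _ _)
      have h4 := SSaux.totalDegree_mul_eq hvand_ne hD0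
      have h5 : E.totalDegree ≤ (fallProd n lam - powProd n lam).totalDegree
          + (prodPlus n l * prodMinus n l).totalDegree := MvPolynomial.totalDegree_mul _ _
      omega
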